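/- Let f : ℝ → ℝ be three times continuously differentiable on the closed interval [t₀, tₑ] with t₀ < tₑ, and let M₃ ≥ 0 satisfy |f'''(s)| ≤ M₃ for all s ∈ [t₀, tₑ]. Define the numerical second derivative D = (f'(tₑ) − f'(t₀))/(tₑ − t₀) and the beginning-point quadratic approximation g₀(t) = f(t₀) + (t − t₀)·f'(t₀) + ½·(t − t₀)²·D. Then for every t ∈ [t₀, tₑ], |f(t) − g₀(t)| ≤ (1/6)·(t − t₀)³·M₃ + ½·(t − t₀)²·(tₑ − t₀)·M₃. -/

import Mathlib

open Set

lemma icc_mem_nhdsWithin_Ici' {a b x : ℝ} (hx : x ∈ Ico a b) :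
    Icc a b ∈ nhdsWithin x (Ici x) := by
  have : Icc x b ∈ nhdsWithin x (Ici x) := by
    rw [← nhdsWithin_Icc_eq_nhdsGE hx.2]
    exact self_mem_nhdsWithin
  exact Filter.mem_of_superset this (Icc_subset_Icc hx.1 le_rfl)

/-- Fencing lemma: bound |g| on `[a,b]` by `B` when `|g'| ≤ B'` and `|g a| ≤ B a`. -/
lemma abs_le_of_deriv_le {a b : ℝ} (g g' B B' : ℝ → ℝ)
    (hg : ∀ s ∈ Icc a b, HasDerivWithinAt g (g' s) (Icc a b) s)
    (hB : ∀ s, HasDerivAt B (B' s) s)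
    (h0 : |g a| ≤ B a)
    (hb : ∀ s ∈ Icc a b, |g' s| ≤ B' s) :
    ∀ t ∈ Icc a b, |g t| ≤ B t := by
  intro t ht
  have hgc : ContinuousOn g (Icc a b) := fun s hs => (hg s hs).continuousWithinAt
  have hg' : ∀ x ∈ Ico a b, HasDerivWithinAt g (g' x) (Ici x) x := fun x hx =>
    (hg x (Ico_subset_Icc_self hx)).mono_of_mem_nhdsWithin (icc_mem_nhdsWithin_Ici' hx)
  exact image_norm_le_of_norm_deriv_right_le_deriv_boundary hgc hg' h0 hB
    (fun x hx => hb x (Ico_subset_Icc_self hx)) ht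

/-- Error bound for the beginning-point Taylor expansion `x(t, t₀)` in which the
exact second derivative is replaced by the numerical differentiation
`D = (f'(tₑ) − f'(t₀))/(tₑ − t₀)`.  If `f` is three times continuously
differentiable on `[t₀, tₑ]` with `|f'''| ≤ M₃` there, then for every
`t ∈ [t₀, tₑ]`,
`|f(t) − g₀(t)| ≤ (1/6)(t−t₀)³ M₃ + (1/2)(t−t₀)²(tₑ−t₀) M₃`, where
`g₀(t) = f(t₀) + (t−t₀) f'(t₀) + (1/2)(t−t₀)² D`. -/
theorem beginning_point_taylor_error
    (t₀ tₑ : ℝ) (ht : t₀ < tₑ)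
    (f f' f'' f''' : ℝ → ℝ)
    (hf : ∀ t ∈ Icc t₀ tₑ, HasDerivWithinAt f (f' t) (Icc t₀ tₑ) t)
    (hf' : ∀ t ∈ Icc t₀ tₑ, HasDerivWithinAt f' (f'' t) (Icc t₀ tₑ) t)
    (hf'' : ∀ t ∈ Icc t₀ tₑ, HasDerivWithinAt f'' (f''' t) (Icc t₀ tₑ) t)
    (hf'''c : ContinuousOn f''' (Icc t₀ tₑ))
    (M₃ : ℝ) (hM₃ : 0 ≤ M₃)
    (hbound : ∀ s ∈ Icc t₀ tₑ, |f''' s| ≤ M₃) :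
    ∀ t ∈ Icc t₀ tₑ,
      |f t - (f t₀ + (t - t₀) * f' t₀ +
        (1 / 2) * (t - t₀) ^ 2 * ((f' tₑ - f' t₀) / (tₑ - t₀)))| ≤
      (1 / 6) * (t - t₀) ^ 3 * M₃ + (1 / 2) * (t - t₀) ^ 2 * (tₑ - t₀) * M₃ := by
  have ht0 : t₀ ∈ Icc t₀ tₑ := ⟨le_rfl, ht.le⟩
  -- Step 1: |f'' s - f'' t₀| ≤ M₃ (s - t₀)
  have step2 : ∀ s ∈ Icc t₀ tₑ, |f'' s - f'' t₀| ≤ M₃ * (s - t₀) := by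
    apply abs_le_of_deriv_le (fun s => f'' s - f'' t₀) f''' (fun s => M₃ * (s - t₀)) (fun _ => M₃)
    · intro s hs
      simpa [Pi.sub_def, Pi.mul_def, Pi.pow_def] using (hf'' s hs).sub (hasDerivWithinAt_const _ _ (f'' t₀))
    · intro s
      simpa [Pi.sub_def, Pi.mul_def, Pi.pow_def] using (hasDerivAt_const s M₃).mul ((hasDerivAt_id s).sub (hasDerivAt_const s t₀))
    · simp
    · exact hbound
  -- Step 2: |f' s - f' t₀ - (s-t₀) f'' t₀| ≤ M₃ (s - t₀)²/2
  have step1 : ∀ s ∈ Icc t₀ tₑ,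
      |f' s - f' t₀ - (s - t₀) * f'' t₀| ≤ M₃ * (s - t₀) ^ 2 / 2 := by
    apply abs_le_of_deriv_le (fun s => f' s - f' t₀ - (s - t₀) * f'' t₀)
      (fun s => f'' s - f'' t₀) (fun s => M₃ * (s - t₀) ^ 2 / 2) (fun s => M₃ * (s - t₀))
    · intro s hs
      have h1 : HasDerivWithinAt (fun s => (s - t₀) * f'' t₀) (f'' t₀) (Icc t₀ tₑ) s := by
        simpa [Pi.sub_def, Pi.mul_def, Pi.pow_def] using (((hasDerivAt_id s).sub (hasDerivAt_const s t₀)).mul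
          (hasDerivAt_const s (f'' t₀))).hasDerivWithinAt
      simpa [Pi.sub_def, Pi.mul_def, Pi.pow_def] using ((hf' s hs).sub (hasDerivWithinAt_const _ _ _)).sub h1
    · intro s
      have : HasDerivAt (fun s : ℝ => (s - t₀) ^ 2) (2 * (s - t₀)) s := by
        simpa [Pi.sub_def, Pi.mul_def, Pi.pow_def] using ((hasDerivAt_id s).sub (hasDerivAt_const s t₀)).pow 2
      have := ((hasDerivAt_const s M₃).mul this).div_const 2
      simp only [Pi.mul_def] at this
      exact this.congr_deriv (by ring)
    · simp
    · exact step2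
  -- Step 3: |f s - f t₀ - (s-t₀) f' t₀ - (s-t₀)²/2 f'' t₀| ≤ M₃ (s - t₀)³/6
  have step0 : ∀ s ∈ Icc t₀ tₑ,
      |f s - f t₀ - (s - t₀) * f' t₀ - (s - t₀) ^ 2 / 2 * f'' t₀|
        ≤ M₃ * (s - t₀) ^ 3 / 6 := by
    apply abs_le_of_deriv_le
      (fun s => f s - f t₀ - (s - t₀) * f' t₀ - (s - t₀) ^ 2 / 2 * f'' t₀)
      (fun s => f' s - f' t₀ - (s - t₀) * f'' t₀)
      (fun s => M₃ * (s - t₀) ^ 3 / 6) (fun s => M₃ * (s - t₀) ^ 2 / 2)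
    · intro s hs
      have h1 : HasDerivAt (fun s => (s - t₀) * f' t₀) (f' t₀) s := by
        simpa [Pi.sub_def, Pi.mul_def, Pi.pow_def] using (((hasDerivAt_id s).sub (hasDerivAt_const s t₀)).mul
          (hasDerivAt_const s (f' t₀)))
      have h2 : HasDerivAt (fun s : ℝ => (s - t₀) ^ 2 / 2 * f'' t₀)
          ((s - t₀) * f'' t₀) s := by
        have : HasDerivAt (fun s : ℝ => (s - t₀) ^ 2) (2 * (s - t₀)) s := by
          simpa [Pi.sub_def, Pi.mul_def, Pi.pow_def] using ((hasDerivAt_id s).sub (hasDerivAt_const s t₀)).pow 2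
        have := (this.div_const 2).mul (hasDerivAt_const s (f'' t₀))
        simp only [Pi.mul_def] at this
        exact this.congr_deriv (by ring)
      simpa [Pi.sub_def, Pi.mul_def, Pi.pow_def] using (((hf s hs).sub (hasDerivWithinAt_const _ _ _)).sub
        h1.hasDerivWithinAt).sub h2.hasDerivWithinAt
    · intro s
      have : HasDerivAt (fun s : ℝ => (s - t₀) ^ 3) (3 * (s - t₀) ^ 2) s := by
        simpa [Pi.sub_def, Pi.mul_def, Pi.pow_def] using ((hasDerivAt_id s).sub (hasDerivAt_const s t₀)).pow 3
      have := ((hasDerivAt_const s M₃).mul this).div_const 6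
      simp only [Pi.mul_def] at this
      exact this.congr_deriv (by ring)
    · simp
    · exact step1
  -- Combine
  intro t htm
  have hdt : 0 ≤ t - t₀ := by linarith [htm.1]
  have hdte : 0 < tₑ - t₀ := by linarith
  have hDbound : |(f' tₑ - f' t₀) / (tₑ - t₀) - f'' t₀| ≤ M₃ * (tₑ - t₀) / 2 := by
    have := step1 tₑ ⟨ht.le, le_rfl⟩
    have heq : (f' tₑ - f' t₀) / (tₑ - t₀) - f'' t₀
        = (f' tₑ - f' t₀ - (tₑ - t₀) * f'' t₀) / (tₑ - t₀) := by
      field_simp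
    rw [heq, abs_div, abs_of_pos hdte, div_le_iff₀ hdte]
    calc |f' tₑ - f' t₀ - (tₑ - t₀) * f'' t₀| ≤ M₃ * (tₑ - t₀) ^ 2 / 2 := this
      _ = M₃ * (tₑ - t₀) / 2 * (tₑ - t₀) := by ring
  have key : f t - (f t₀ + (t - t₀) * f' t₀ +
      (1 / 2) * (t - t₀) ^ 2 * ((f' tₑ - f' t₀) / (tₑ - t₀)))
      = (f t - f t₀ - (t - t₀) * f' t₀ - (t - t₀) ^ 2 / 2 * f'' t₀)
        - (t - t₀) ^ 2 / 2 * ((f' tₑ - f' t₀) / (tₑ - t₀) - f'' t₀) := by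
    ring
  rw [key]
  calc |_| ≤ |f t - f t₀ - (t - t₀) * f' t₀ - (t - t₀) ^ 2 / 2 * f'' t₀|
        + |(t - t₀) ^ 2 / 2 * ((f' tₑ - f' t₀) / (tₑ - t₀) - f'' t₀)| := abs_sub _ _
    _ ≤ M₃ * (t - t₀) ^ 3 / 6 + (t - t₀) ^ 2 / 2 * (M₃ * (tₑ - t₀) / 2) := by
        have h1 := step0 t htm
        have h2 : |(t - t₀) ^ 2 / 2 * ((f' tₑ - f' t₀) / (tₑ - t₀) - f'' t₀)|
            ≤ (t - t₀) ^ 2 / 2 * (M₃ * (tₑ - t₀) / 2) := by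
          rw [abs_mul, abs_of_nonneg (by positivity : (0:ℝ) ≤ (t - t₀) ^ 2 / 2)]
          gcongr
        linarith
    _ ≤ (1 / 6) * (t - t₀) ^ 3 * M₃ + (1 / 2) * (t - t₀) ^ 2 * (tₑ - t₀) * M₃ := by
        nlinarith [sq_nonneg (t - t₀), mul_nonneg (mul_nonneg hM₃ (sq_nonneg (t-t₀))) hdte.le]
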